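/- Let A ≅ ℤ₂^r × N with N non-cyclic of odd order, n = |A|, m = 2^r, and Γ = Γ(A,S) a Cayley graph with Aut(Γ) ≅ A ⋊ ⟨i⟩. If χ(Γ) < n/(m + 2·log₂(2n)), then χ_D(Γ) ≤ χ(Γ) + 1. -/

import Mathlib

open Finset

lemma count_inv_involution {A : Type*} [Fintype A] [DecidableEq A]
    (C : Finset A) (π : A → A) (hinv : ∀ x, π (π x) = x) (M : ℕ)
    (hfix : (univ.filter (fun x => π x = x)).card ≤ M) :
    ((C.powerset.filter (fun D => ∀ x, x ∈ D ↔ π x ∈ D)).card ≤ 2 ^ ((C.card + M) / 2)) := by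
  classical
  have hπinj : Function.Injective π := by
    intro a b h
    have := congrArg π h
    rwa [hinv, hinv] at this
  set e := Fintype.equivFin A with he
  set T' : Finset A := C.filter (fun x => (e x : ℕ) ≤ e (π x) ∧ π x ∈ C) with hT'
  -- injection into powerset of T'
  have hcard1 : (C.powerset.filter (fun D => ∀ x, x ∈ D ↔ π x ∈ D)).card ≤ T'.powerset.card := by
    apply Finset.card_le_card_of_injOn (fun D => D.filter (fun x => (e x : ℕ) ≤ e (π x)))
    · intro D hD
      simp only [mem_coe, mem_filter, mem_powerset] at hD
      obtain ⟨hDC, hDinv⟩ := hD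
      simp only [mem_coe, mem_powerset]
      intro x hx
      simp only [mem_filter] at hx
      obtain ⟨hxD, hxle⟩ := hx
      simp only [hT', mem_filter]
      exact ⟨hDC hxD, hxle, hDC ((hDinv x).1 hxD)⟩
    · intro D₁ hD₁ D₂ hD₂ h
      simp only [coe_filter, mem_powerset, Set.mem_setOf_eq] at hD₁ hD₂
      obtain ⟨hD₁C, hD₁inv⟩ := hD₁
      obtain ⟨hD₂C, hD₂inv⟩ := hD₂
      -- D is recoverable
      have key : ∀ (D : Finset A), (∀ x, x ∈ D ↔ π x ∈ D) →
          D = (D.filter (fun x => (e x : ℕ) ≤ e (π x))) ∪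
            (D.filter (fun x => (e x : ℕ) ≤ e (π x))).image π := by
        intro D hDinv
        ext x
        simp only [mem_union, mem_filter, mem_image]
        constructor
        · intro hx
          rcases le_total ((e x : ℕ)) ((e (π x) : ℕ)) with h1 | h1
          · exact Or.inl ⟨hx, h1⟩
          · refine Or.inr ⟨π x, ⟨(hDinv x).1 hx, ?_⟩, hinv x⟩
            rw [hinv]; exact h1
        · rintro (⟨hx, _⟩ | ⟨y, ⟨hy, _⟩, rfl⟩)
          · exact hx
          · exact (hDinv y).1 hy
      have h2 : D₁.filter (fun x => (e x : ℕ) ≤ e (π x)) = D₂.filter (fun x => (e x : ℕ) ≤ e (π x)) := h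
      rw [key D₁ hD₁inv, key D₂ hD₂inv, h2]
  rw [card_powerset] at hcard1
  refine hcard1.trans (Nat.pow_le_pow_right (by norm_num) ?_)
  -- |T'| ≤ (|C| + M)/2
  rw [Nat.le_div_iff_mul_le (by norm_num)]
  set F := T'.filter (fun x => π x = x) with hF
  set P := T'.filter (fun x => π x ≠ x) with hP
  have hsplit : F.card + P.card = T'.card := card_filter_add_card_filter_not _
  have hFM : F.card ≤ M := by
    refine le_trans (card_le_card ?_) hfix
    intro x hx
    simp only [hF, hT', mem_filter] at hx ⊢
    exact ⟨mem_univ x, hx.2⟩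
  have hsub : F ∪ P ∪ P.image π ⊆ C := by
    intro x hx
    simp only [mem_union, mem_image] at hx
    rcases hx with (hx | hx) | ⟨y, hy, rfl⟩
    · exact mem_of_mem_filter x (mem_of_mem_filter x hx)
    · exact mem_of_mem_filter x (mem_of_mem_filter x hx)
    · simp only [hP, hT', mem_filter] at hy
      exact hy.1.2.2
  have hd1 : Disjoint (F ∪ P) (P.image π) := by
    rw [disjoint_left]
    intro a ha hb
    simp only [mem_image] at hb
    obtain ⟨y, hy, rfl⟩ := hb
    simp only [hP, hT', mem_filter] at hy
    obtain ⟨⟨_, hyle, _⟩, hyne⟩ := hy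
    have hylt : (e y : ℕ) < e (π y) := lt_of_le_of_ne hyle (by
      intro hcontra
      exact hyne (e.injective (Fin.ext hcontra)).symm)
    simp only [mem_union, hF, hP, hT', mem_filter] at ha
    rcases ha with ⟨_, hfix'⟩ | ⟨⟨_, hle, _⟩, hne⟩
    · exact hyne (hfix'.symm.trans (hinv y))
    · rw [hinv] at hle
      exact absurd (lt_of_lt_of_le hylt hle) (lt_irrefl _)
  have hd2 : Disjoint F P := by
    rw [disjoint_left]
    intro a ha hb
    simp only [hF, mem_filter] at ha
    simp only [hP, mem_filter] at hb
    exact hb.2 ha.2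
  have hcardim : (P.image π).card = P.card := card_image_of_injective _ hπinj
  have : (F ∪ P ∪ P.image π).card = F.card + P.card + P.card := by
    rw [card_union_of_disjoint hd1, card_union_of_disjoint hd2, hcardim]
  have hle : F.card + P.card + P.card ≤ C.card := this ▸ card_le_card hsub
  omega


lemma count_inv_translation {A : Type*} [AddCommGroup A] [Fintype A] [DecidableEq A]
    (C : Finset A) (g : A) (hg : g ≠ 0) :
    ((C.powerset.filter (fun D => ∀ x, x ∈ D ↔ g + x ∈ D)).card ≤ 2 ^ (C.card / 2)) := by
  classical
  set H := AddSubgroup.zmultiples g with hH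
  let Q := A ⧸ H
  letI : Fintype Q := Fintype.ofFinite Q
  let φ : A → Q := QuotientAddGroup.mk
  have hφg : ∀ x : A, φ (x + g) = φ x := by
    intro x
    apply (QuotientAddGroup.eq (s := H)).mpr
    have : -(x + g) + x = -g := by abel
    rw [this]
    exact neg_mem (AddSubgroup.mem_zmultiples g)
  -- key: invariance propagates along fibers
  have key : ∀ (D : Finset A), (∀ x, x ∈ D ↔ g + x ∈ D) →
      ∀ x y : A, φ x = φ y → (x ∈ D ↔ y ∈ D) := by
    intro D hD x y hxy
    have h1 : -x + y ∈ H := QuotientAddGroup.eq.mp hxy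
    obtain ⟨c, hc⟩ := AddSubgroup.mem_zmultiples_iff.mp h1
    have hy : y = x + c • g := by rw [hc]; abel
    subst hy
    clear hc h1 hxy
    induction c using Int.induction_on with
    | zero => simp
    | succ i ih =>
      have h2 : x + (i + 1 : ℤ) • g = g + (x + (i:ℤ) • g) := by
        rw [add_zsmul, one_zsmul]; abel
      rw [h2, ← hD]
      exact ih
    | pred i ih =>
      have h2 : x + (-i : ℤ) • g = g + (x + (-i - 1 : ℤ) • g) := by
        rw [sub_zsmul, one_zsmul]; abel
      rw [h2, ← hD] at ih
      exact ih
  set Q' : Finset Q := univ.filter (fun q => ∀ x : A, φ x = q → x ∈ C) with hQ'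
  have hcard1 : (C.powerset.filter (fun D => ∀ x, x ∈ D ↔ g + x ∈ D)).card ≤ Q'.powerset.card := by
    apply Finset.card_le_card_of_injOn (fun D => D.image φ)
    · intro D hD
      simp only [mem_coe, mem_filter, mem_powerset] at hD
      obtain ⟨hDC, hDinv⟩ := hD
      simp only [mem_coe, mem_powerset]
      intro q hq
      simp only [mem_image] at hq
      obtain ⟨y, hy, rfl⟩ := hq
      simp only [hQ', mem_filter]
      exact ⟨mem_univ _, fun x hx => hDC ((key D hDinv x y hx).mpr hy)⟩
    · intro D₁ hD₁ D₂ hD₂ h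
      simp only [coe_filter, mem_powerset, Set.mem_setOf_eq] at hD₁ hD₂
      have h2 : D₁.image φ = D₂.image φ := h
      ext x
      constructor
      · intro hx
        have : φ x ∈ D₂.image φ := h2 ▸ mem_image_of_mem φ hx
        obtain ⟨y, hy, hyx⟩ := mem_image.mp this
        exact (key D₂ hD₂.2 x y hyx.symm).mpr hy
      · intro hx
        have : φ x ∈ D₁.image φ := h2.symm ▸ mem_image_of_mem φ hx
        obtain ⟨y, hy, hyx⟩ := mem_image.mp this
        exact (key D₁ hD₁.2 x y hyx.symm).mpr hy
  rw [card_powerset] at hcard1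
  refine hcard1.trans (Nat.pow_le_pow_right (by norm_num) ?_)
  -- |Q'| ≤ |C|/2 : each fiber has ≥ 2 elements inside C
  rw [Nat.le_div_iff_mul_le (by norm_num)]
  have hfib : ∀ q ∈ Q', 2 ≤ (univ.filter (fun x : A => φ x = q)).card := by
    intro q hq
    obtain ⟨y, rfl⟩ := QuotientAddGroup.mk_surjective q
    have h1 : y ∈ univ.filter (fun x : A => φ x = QuotientAddGroup.mk y) := by
      simp [φ]
    have h2 : y + g ∈ univ.filter (fun x : A => φ x = QuotientAddGroup.mk y) := by
      simp only [mem_filter, mem_univ, true_and]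
      exact hφg y
    have hne : y ≠ y + g := by
      intro hcon
      apply hg
      have := hcon
      nth_rewrite 1 [← add_zero y] at this
      exact (add_left_cancel this).symm
    calc 2 = ({y, y + g} : Finset A).card := by rw [card_insert_of_notMem (by simpa using hne), card_singleton]
    _ ≤ _ := card_le_card (by intro z hz; simp only [mem_insert, mem_singleton] at hz; rcases hz with rfl | rfl <;> assumption)
  calc Q'.card * 2 = ∑ _q ∈ Q', 2 := by rw [sum_const, smul_eq_mul]
  _ ≤ ∑ q ∈ Q', (univ.filter (fun x : A => φ x = q)).card := sum_le_sum hfib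
  _ = (Q'.biUnion (fun q => univ.filter (fun x : A => φ x = q))).card := by
      rw [card_biUnion]
      intro q1 h1 q2 h2 hne
      rw [Function.onFun, disjoint_left]
      intro a ha hb
      simp only [mem_filter] at ha hb
      exact hne (ha.2 ▸ hb.2 ▸ rfl)
  _ ≤ C.card := by
      apply card_le_card
      intro x hx
      simp only [mem_biUnion, mem_filter] at hx
      obtain ⟨q, hq, _, rfl⟩ := hx
      simp only [hQ', mem_filter] at hq
      exact hq.2 x rfl


lemma exists_good_subset {A : Type*} [AddCommGroup A] [Fintype A] [DecidableEq A]
    (C : Finset A) (M : ℕ)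
    (hfix : ∀ g : A, (univ.filter (fun x => x + x = g)).card ≤ M)
    (hbig : (2 * Fintype.card A) ^ 2 * 2 ^ M < 2 ^ C.card) :
    ∃ D : Finset A, D ⊆ C ∧ (∀ g : A, g ≠ 0 → ∃ x, ¬(x ∈ D ↔ g + x ∈ D)) ∧
      (∀ g : A, ∃ x, ¬(x ∈ D ↔ g - x ∈ D)) := by
  classical
  set n := Fintype.card A with hn
  set c := C.card with hc
  set BadT : A → Finset (Finset A) := fun g => C.powerset.filter (fun D => ∀ x, x ∈ D ↔ g + x ∈ D) with hBadT
  set BadR : A → Finset (Finset A) := fun g => C.powerset.filter (fun D => ∀ x, x ∈ D ↔ g - x ∈ D) with hBadR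
  set Bad : Finset (Finset A) := ((univ.filter (fun g : A => g ≠ 0)).biUnion BadT) ∪ univ.biUnion BadR with hBad
  have hBadRcard : ∀ g : A, (BadR g).card ≤ 2 ^ ((c + M) / 2) := by
    intro g
    apply count_inv_involution C (fun x => g - x) (fun x => sub_sub_cancel g x) M
    refine le_trans (le_of_eq (congrArg card ?_)) (hfix g)
    apply filter_congr
    intro x _
    constructor
    · intro h
      exact (sub_eq_iff_eq_add.mp h).symm
    · intro h
      rw [← h, add_sub_cancel_right]
  have hBadTcard : ∀ g : A, g ≠ 0 → (BadT g).card ≤ 2 ^ ((c + M) / 2) := by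
    intro g hg
    refine (count_inv_translation C g hg).trans (Nat.pow_le_pow_right (by norm_num) ?_)
    exact Nat.div_le_div_right (Nat.le_add_right c M)
  have hBadcard : Bad.card ≤ 2 * n * 2 ^ ((c + M) / 2) := by
    calc Bad.card ≤ ((univ.filter (fun g : A => g ≠ 0)).biUnion BadT).card + (univ.biUnion BadR).card :=
          card_union_le _ _
    _ ≤ (∑ g ∈ univ.filter (fun g : A => g ≠ 0), (BadT g).card) + ∑ g : A, (BadR g).card :=
          Nat.add_le_add (card_biUnion_le) (card_biUnion_le)
    _ ≤ (∑ _g ∈ univ.filter (fun g : A => g ≠ 0), 2 ^ ((c + M) / 2)) + ∑ _g : A, 2 ^ ((c + M) / 2) := by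
          refine Nat.add_le_add (sum_le_sum ?_) (sum_le_sum ?_)
          · intro g hg
            exact hBadTcard g (by simpa using hg)
          · intro g _
            exact hBadRcard g
    _ ≤ n * 2 ^ ((c + M) / 2) + n * 2 ^ ((c + M) / 2) := by
          rw [sum_const, sum_const, smul_eq_mul, smul_eq_mul]
          refine Nat.add_le_add (Nat.mul_le_mul_right _ ?_) (Nat.mul_le_mul_right _ ?_)
          · exact le_trans (card_filter_le _ _) (le_of_eq (card_univ))
          · exact le_of_eq (card_univ)
    _ = 2 * n * 2 ^ ((c + M) / 2) := by ring
  have hstrict : 2 * n * 2 ^ ((c + M) / 2) < 2 ^ c := by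
    by_contra hcon
    push_neg at hcon
    have h1 : (2 ^ c) ^ 2 ≤ (2 * n * 2 ^ ((c + M) / 2)) ^ 2 := Nat.pow_le_pow_left hcon 2
    have h2 : (2 * n * 2 ^ ((c + M) / 2)) ^ 2 ≤ (2 * n) ^ 2 * 2 ^ (c + M) := by
      rw [mul_pow, ← pow_mul]
      refine Nat.mul_le_mul_left _ (Nat.pow_le_pow_right (by norm_num) ?_)
      omega
    have h3 : (2 * n) ^ 2 * 2 ^ (c + M) = ((2 * n) ^ 2 * 2 ^ M) * 2 ^ c := by
      rw [pow_add]; ring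
    have h4 : ((2 * n) ^ 2 * 2 ^ M) * 2 ^ c < 2 ^ c * 2 ^ c :=
      (Nat.mul_lt_mul_right (pow_pos (by norm_num : (0:ℕ) < 2) c)).mpr hbig
    have : (2 ^ c) ^ 2 < (2 ^ c) ^ 2 := by
      calc (2 ^ c) ^ 2 ≤ (2 * n * 2 ^ ((c + M) / 2)) ^ 2 := h1
      _ ≤ (2 * n) ^ 2 * 2 ^ (c + M) := h2
      _ = ((2 * n) ^ 2 * 2 ^ M) * 2 ^ c := h3
      _ < 2 ^ c * 2 ^ c := h4
      _ = (2 ^ c) ^ 2 := (sq _).symm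
    exact absurd this (lt_irrefl _)
  have hlt : Bad.card < C.powerset.card := by
    rw [card_powerset]
    exact lt_of_le_of_lt hBadcard hstrict
  have hex : ∃ D ∈ C.powerset, D ∉ Bad := by
    by_contra hcon
    push_neg at hcon
    exact absurd (card_le_card hcon) (not_le.mpr hlt)
  obtain ⟨D, hD1, hD2⟩ := hex
  refine ⟨D, mem_powerset.mp hD1, ?_, ?_⟩
  · intro g hg
    by_contra hcon
    push_neg at hcon
    apply hD2
    rw [hBad, mem_union]
    left
    rw [mem_biUnion]
    refine ⟨g, by simp [hg], ?_⟩
    rw [hBadT, mem_filter]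
    exact ⟨hD1, fun x => hcon x⟩
  · intro g
    by_contra hcon
    push_neg at hcon
    apply hD2
    rw [hBad, mem_union]
    right
    rw [mem_biUnion]
    refine ⟨g, mem_univ _, ?_⟩
    rw [hBadR, mem_filter]
    exact ⟨hD1, fun x => hcon x⟩



/-- The Cayley graph of an additive group A with inverse-closed connection set S, 0 ∉ S. -/
def cayleyGraph {A : Type*} [AddCommGroup A] (S : Set A)
    (hS : ∀ s ∈ S, -s ∈ S) (h0 : (0 : A) ∉ S) : SimpleGraph A where
  Adj x y := y - x ∈ S
  symm := by
    constructor
    intro x y h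
    have := hS _ h
    simpa [neg_sub] using this
  loopless := by
    constructor
    intro x h
    simp only [sub_self] at h
    exact h0 h

/-- A coloring is proper and distinguishing if it is proper and no nontrivial
automorphism preserves every color class. -/
def IsProperDistinguishing {V : Type*} (G : SimpleGraph V) {β : Type*} (c : V → β) : Prop :=
  (∀ ⦃u v : V⦄, G.Adj u v → c u ≠ c v) ∧
    ∀ e : G ≃g G, (∀ v, c (e v) = c v) → ∀ v, e v = v

/-- The distinguishing chromatic number. -/
noncomputable def distChromaticNumber {V : Type*} (G : SimpleGraph V) : ℕ :=
  sInf {r : ℕ | ∃ c : V → Fin r, IsProperDistinguishing G c}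

/-- For A = ℤ₂^r × N with N non-cyclic of odd order, n = |A|, m = 2^r, if
Aut(Γ(A,S)) = A ⋊ ⟨i⟩ (every automorphism is a translation or x ↦ g - x) and
χ(Γ) < n/(m + 2 log₂(2n)), then χ_D(Γ) ≤ χ(Γ) + 1. -/
lemma fix_card_le {N : Type*} [AddCommGroup N] [Fintype N] [DecidableEq N] (r : ℕ)
    (hodd : Odd (Fintype.card N)) (g : (Fin r → ZMod 2) × N) :
    (univ.filter (fun x : (Fin r → ZMod 2) × N => x + x = g)).card ≤ 2 ^ r := by
  classical
  have hodd' : ∀ b : N, b + b = 0 → b = 0 := by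
    intro b hb
    have h2 : (2 : ℕ) • b = 0 := by rw [two_nsmul]; exact hb
    have hd : addOrderOf b ∣ 2 := addOrderOf_dvd_of_nsmul_eq_zero h2
    have hdc : addOrderOf b ∣ Fintype.card N := addOrderOf_dvd_card
    rcases (Nat.dvd_prime Nat.prime_two).mp hd with h1 | h1
    · exact AddMonoid.addOrderOf_eq_one_iff.mp h1
    · exfalso
      rw [h1] at hdc
      rw [Nat.odd_iff] at hodd
      omega
  have : (univ.filter (fun x : (Fin r → ZMod 2) × N => x + x = g)).card
      ≤ Fintype.card (Fin r → ZMod 2) := by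
    rw [← Finset.card_univ]
    apply Finset.card_le_card_of_injOn (fun x => x.1) (fun _ _ => mem_univ _)
    intro x hx y hy hxy
    simp only [coe_filter, Set.mem_setOf_eq] at hx hy
    have hx2 : x.2 + x.2 = g.2 := congrArg Prod.snd hx.2
    have hy2 : y.2 + y.2 = g.2 := congrArg Prod.snd hy.2
    have : (x.2 - y.2) + (x.2 - y.2) = 0 := by
      have := hx2.trans hy2.symm
      rw [sub_add_sub_comm, this, sub_self]
    have h22 := hodd' _ this
    have h2 : x.2 = y.2 := by
      have := sub_eq_zero.mp h22
      exact this
    exact Prod.ext hxy h2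
  simpa using this

theorem stmt_17 {N : Type*} [AddCommGroup N] [Fintype N] [DecidableEq N] (r : ℕ)
    (hodd : Odd (Fintype.card N)) (hnc : ¬ IsAddCyclic N)
    (S : Set ((Fin r → ZMod 2) × N))
    (hS : ∀ s ∈ S, -s ∈ S) (h0 : (0 : (Fin r → ZMod 2) × N) ∉ S)
    (haut : ∀ e : cayleyGraph S hS h0 ≃g cayleyGraph S hS h0,
      (∃ g, ∀ x, e x = g + x) ∨ (∃ g, ∀ x, e x = g - x))
    (n m : ℕ) (hn : n = Fintype.card ((Fin r → ZMod 2) × N)) (hm : m = 2 ^ r)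
    (k : ℕ) (hk : (cayleyGraph S hS h0).chromaticNumber = (k : ℕ∞))
    (hchi : (k : ℝ) < (n : ℝ) / ((m : ℝ) + 2 * Real.logb 2 (2 * n))) :
    distChromaticNumber (cayleyGraph S hS h0) ≤ k + 1 := by
  classical
  have hcolorable : (cayleyGraph S hS h0).Colorable k :=
    SimpleGraph.chromaticNumber_le_iff_colorable.mp (le_of_eq hk)
  obtain ⟨f⟩ := hcolorable
  have hnpos : 0 < n := by rw [hn]; exact Fintype.card_pos
  have hk0 : 0 < k := by
    apply Nat.pos_of_ne_zero
    intro h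
    subst h
    exact (f (0 : (Fin r → ZMod 2) × N)).elim0
  -- largest color class
  obtain ⟨j, _, hj⟩ := Finset.exists_max_image (univ : Finset (Fin k))
    (fun j => (univ.filter (fun x : (Fin r → ZMod 2) × N => f x = j)).card) ⟨⟨0, hk0⟩, mem_univ _⟩
  set C : Finset ((Fin r → ZMod 2) × N) := univ.filter (fun x : (Fin r → ZMod 2) × N => f x = j) with hC
  set c : ℕ := C.card with hc
  have hsum : Fintype.card ((Fin r → ZMod 2) × N) = ∑ i : Fin k, (univ.filter (fun x : (Fin r → ZMod 2) × N => f x = i)).card := by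
    rw [← Finset.card_univ]
    exact Finset.card_eq_sum_card_fiberwise (fun x _ => mem_univ (f x))
  have hnkc : n ≤ k * c := by
    rw [hn, hsum]
    calc ∑ i : Fin k, (univ.filter (fun x : (Fin r → ZMod 2) × N => f x = i)).card
        ≤ (univ : Finset (Fin k)).card • c := Finset.sum_le_card_nsmul _ _ _ (fun i hi => hj i hi)
    _ = k * c := by rw [Finset.card_univ, Fintype.card_fin, smul_eq_mul]
  -- real inequalities
  set L : ℝ := Real.logb 2 (2 * n) with hL
  have h2n1 : (1 : ℝ) < 2 * n := by
    have : (1 : ℝ) ≤ (n : ℝ) := by exact_mod_cast hnpos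
    nlinarith
  have hLpos : 0 < L := Real.logb_pos (by norm_num) h2n1
  have hmpos : (1 : ℝ) ≤ m := by
    rw [hm]
    exact_mod_cast Nat.one_le_two_pow
  have hdpos : (0 : ℝ) < (m : ℝ) + 2 * L := by nlinarith
  have hkd : (k : ℝ) * ((m : ℝ) + 2 * L) < n := (lt_div_iff₀ hdpos).mp hchi
  have hcm : (m : ℝ) + 2 * L < c := by
    have h1 : (n : ℝ) ≤ (k : ℝ) * c := by exact_mod_cast hnkc
    have hkr : (0 : ℝ) < k := by exact_mod_cast hk0
    nlinarith
  have hmlec : m < c := by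
    have : (m : ℝ) < c := by nlinarith
    exact_mod_cast this
  -- the numeric bound
  have hbig : (2 * Fintype.card ((Fin r → ZMod 2) × N)) ^ 2 * 2 ^ m < 2 ^ c := by
    have h1 : Real.logb 2 ((2 * n : ℝ) ^ 2) < ((c - m : ℕ) : ℝ) := by
      rw [Real.logb_pow]
      push_cast [Nat.cast_sub hmlec.le]
      nlinarith
    have h2 : ((2 * n : ℝ) ^ 2) < (2 : ℝ) ^ (((c - m : ℕ) : ℝ)) :=
      (Real.logb_lt_iff_lt_rpow (by norm_num) (by positivity)).mp h1
    rw [Real.rpow_natCast] at h2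
    have h3 : (2 * n) ^ 2 < 2 ^ (c - m) := by exact_mod_cast h2
    have h4 : (2 * n) ^ 2 * 2 ^ m < 2 ^ (c - m) * 2 ^ m :=
      Nat.mul_lt_mul_right (pow_pos (by norm_num : (0:ℕ) < 2) m) |>.mpr h3
    rw [← pow_add, Nat.sub_add_cancel hmlec.le] at h4
    rw [← hn]
    exact h4
  -- get the distinguishing set
  obtain ⟨D, hDC, hD1, hD2⟩ := exists_good_subset C m
    (fun g => hm ▸ fix_card_le r hodd g) hbig
  -- define the coloring
  set col : ((Fin r → ZMod 2) × N) → Fin (k + 1) :=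
    fun x => if x ∈ D then Fin.last k else (f x).castSucc with hcoldef
  have hmemD : ∀ y : (Fin r → ZMod 2) × N, y ∈ D ↔ col y = Fin.last k := by
    intro y
    constructor
    · intro hy; simp [hcoldef, hy]
    · intro hy
      by_contra hcon
      rw [hcoldef] at hy
      simp only [if_neg hcon] at hy
      exact absurd hy (Fin.castSucc_lt_last (f y)).ne
  have hproper : ∀ ⦃u v : (Fin r → ZMod 2) × N⦄, (cayleyGraph S hS h0).Adj u v → col u ≠ col v := by
    intro u v hadj
    have hfv := f.valid hadj
    by_cases hu : u ∈ D <;> by_cases hv : v ∈ D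
    · exfalso
      have h1 : f u = j := (mem_filter.mp (hDC hu)).2
      have h2 : f v = j := (mem_filter.mp (hDC hv)).2
      exact hfv (h1.trans h2.symm)
    · simp only [hcoldef, if_pos hu, if_neg hv]
      exact (Fin.castSucc_lt_last (f v)).ne'
    · simp only [hcoldef, if_neg hu, if_pos hv]
      exact (Fin.castSucc_lt_last (f u)).ne
    · simp only [hcoldef, if_neg hu, if_neg hv]
      intro hcon
      exact hfv (Fin.castSucc_inj.mp hcon)
  have hdist : ∀ e : cayleyGraph S hS h0 ≃g cayleyGraph S hS h0,
      (∀ v, col (e v) = col v) → ∀ v, e v = v := by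
    intro e hpres
    rcases haut e with ⟨g, hg⟩ | ⟨g, hg⟩
    · have hg0 : g = 0 := by
        by_contra hg0
        obtain ⟨x, hx⟩ := hD1 g hg0
        apply hx
        rw [hmemD x, hmemD (g + x), ← hg x, hpres x]
      intro v
      rw [hg v, hg0, zero_add]
    · exfalso
      obtain ⟨x, hx⟩ := hD2 g
      apply hx
      rw [hmemD x, hmemD (g - x), ← hg x, hpres x]
  have hmem : k + 1 ∈ {t : ℕ | ∃ cc : ((Fin r → ZMod 2) × N) → Fin t,
      IsProperDistinguishing (cayleyGraph S hS h0) cc} :=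
    ⟨col, hproper, hdist⟩
  exact Nat.sInf_le hmem
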